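/- Soft-thresholding composition: let f be the Lovász extension of a submodular F with F(∅)=F(V)=0 and let λ > 0. If w minimizes (1/2)‖w − z‖² + f(w), then t defined by t_k = sign(w_k)·max(|w_k| − λ, 0) minimizes (1/2)‖t − z‖² + f(t) + λ‖t‖₁. -/

import Mathlib

open MeasureTheory Finset

/-- Submodularity of a set function on the power set of `Fin p`. -/
def Submodular {p : ℕ} (F : Finset (Fin p) → ℝ) : Prop :=
  ∀ A B : Finset (Fin p), F (A ∪ B) + F (A ∩ B) ≤ F A + F B

/-- The Lovász extension `f(w) = ∫_ℝ F({i : w i ≥ α}) dα`. -/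
noncomputable def lovasz {p : ℕ} (F : Finset (Fin p) → ℝ) (w : Fin p → ℝ) : ℝ :=
  ∫ α : ℝ, F (Finset.univ.filter (fun i => α ≤ w i))

namespace ProxAux

variable {p : ℕ}

/-- top-`k` set for the ordering `σ` -/
def SS (σ : Equiv.Perm (Fin p)) (k : ℕ) : Finset (Fin p) :=
  Finset.univ.filter fun i => (σ.symm i : ℕ) < k

/-- `k`-th sorted value (clamped) -/
noncomputable def bb (v : Fin p → ℝ) (σ : Equiv.Perm (Fin p)) (k : ℕ) : ℝ :=
  if h : k < p then v (σ ⟨k, h⟩)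
  else if h0 : 0 < p then v (σ ⟨p - 1, by omega⟩) else 0

/-- `s ∘ σ` padded with zeros -/
noncomputable def snn (s : Fin p → ℝ) (σ : Equiv.Perm (Fin p)) (m : ℕ) : ℝ :=
  if h : m < p then s (σ ⟨m, h⟩) else 0

lemma mem_SS {σ : Equiv.Perm (Fin p)} {k : ℕ} {i : Fin p} :
    i ∈ SS σ k ↔ (σ.symm i : ℕ) < k := by simp [SS]

lemma SS_zero (σ : Equiv.Perm (Fin p)) : SS σ 0 = ∅ := by
  ext i; simp [mem_SS]

lemma SS_of_ge (σ : Equiv.Perm (Fin p)) {k : ℕ} (h : p ≤ k) : SS σ k = Finset.univ := by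
  ext i; simp only [mem_SS, Finset.mem_univ, iff_true]
  exact lt_of_lt_of_le (σ.symm i).isLt h

lemma SS_succ (σ : Equiv.Perm (Fin p)) {k : ℕ} (h : k < p) :
    SS σ (k + 1) = insert (σ ⟨k, h⟩) (SS σ k) := by
  ext i
  simp only [mem_SS, Finset.mem_insert]
  constructor
  · intro hi
    rcases Nat.lt_succ_iff_lt_or_eq.1 hi with h1 | h1
    · exact Or.inr h1
    · left
      have : σ.symm i = ⟨k, h⟩ := Fin.ext h1
      rw [← this]; simp
  · rintro (rfl | h1)
    · simp
    · omega

lemma not_mem_SS_self (σ : Equiv.Perm (Fin p)) {k : ℕ} (h : k < p) :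
    σ ⟨k, h⟩ ∉ SS σ k := by
  simp [mem_SS]

lemma sum_SS (σ : Equiv.Perm (Fin p)) (s : Fin p → ℝ) (k : ℕ) :
    (SS σ k).sum s = ∑ m ∈ Finset.range k, snn s σ m := by
  induction k with
  | zero => simp [SS_zero]
  | succ k ih =>
    rw [Finset.sum_range_succ, ← ih]
    by_cases h : k < p
    · rw [SS_succ σ h, Finset.sum_insert (not_mem_SS_self σ h)]
      rw [snn, dif_pos h]; ring
    · push_neg at h
      rw [SS_of_ge σ h, SS_of_ge σ (le_trans h (Nat.le_succ k)), snn, dif_neg (by omega)]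
      ring

lemma abel_nat (f g : ℕ → ℝ) (n : ℕ) :
    ∑ m ∈ Finset.range n, f m * g m =
      (∑ j ∈ Finset.range n, (∑ m ∈ Finset.range (j + 1), f m) * (g j - g (j + 1))) +
        (∑ m ∈ Finset.range n, f m) * g n := by
  induction n with
  | zero => simp
  | succ n ih =>
    rw [Finset.sum_range_succ, ih, Finset.sum_range_succ (f := fun j =>
      (∑ m ∈ Finset.range (j + 1), f m) * (g j - g (j + 1))),
      Finset.sum_range_succ (f := f)]
    ring

lemma inner_eq (σ : Equiv.Perm (Fin p)) (s v : Fin p → ℝ) :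
    ∑ i, s i * v i = ∑ m ∈ Finset.range p, snn s σ m * bb v σ m := by
  rw [← Equiv.sum_comp σ (fun i => s i * v i),
    ← Fin.sum_univ_eq_sum_range (fun m => snn s σ m * bb v σ m) p]
  apply Finset.sum_congr rfl
  intro m _
  rw [snn, bb, dif_pos m.isLt, dif_pos m.isLt]

lemma abel_main (σ : Equiv.Perm (Fin p)) (s v : Fin p → ℝ) :
    ∑ i, s i * v i =
      (∑ j ∈ Finset.range p, (SS σ (j + 1)).sum s * (bb v σ j - bb v σ (j + 1))) +
        (Finset.univ.sum s) * bb v σ p := by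
  rw [inner_eq σ s v, abel_nat (snn s σ) (bb v σ) p]
  congr 1
  · apply Finset.sum_congr rfl
    intro j _
    rw [sum_SS]
  · congr 1
    rw [← sum_SS, SS_of_ge σ le_rfl]

section Sorted

variable {v : Fin p → ℝ} {σ : Equiv.Perm (Fin p)}

/-- antitone sorted values -/
def SortedBy (v : Fin p → ℝ) (σ : Equiv.Perm (Fin p)) : Prop :=
  ∀ j k : Fin p, j ≤ k → v (σ k) ≤ v (σ j)

lemma bb_le (hs : SortedBy v σ) (m : Fin p) {k : ℕ} (h : k ≤ (m : ℕ)) :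
    v (σ m) ≤ bb v σ k := by
  have hk : k < p := lt_of_le_of_lt h m.isLt
  rw [bb, dif_pos hk]
  exact hs ⟨k, hk⟩ m h

lemma le_bb (hs : SortedBy v σ) (m : Fin p) {k : ℕ} (h : (m : ℕ) ≤ k) :
    bb v σ k ≤ v (σ m) := by
  rw [bb]
  split_ifs with h1 h2
  · exact hs m ⟨k, h1⟩ h
  · refine hs m ⟨p - 1, by omega⟩ ?_
    rw [Fin.le_def]
    simp only [Fin.val_mk]
    omega
  · exact absurd m.isLt (by omega)

lemma bb_anti (hs : SortedBy v σ) {j k : ℕ} (h : j ≤ k) : bb v σ k ≤ bb v σ j := by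
  by_cases hj : j < p
  · have hbj : bb v σ j = v (σ ⟨j, hj⟩) := by rw [bb]; exact dif_pos hj
    rw [hbj]
    exact le_bb hs ⟨j, hj⟩ h
  · have h2 : ¬ k < p := by omega
    have e1 : bb v σ j = bb v σ p := by rw [bb, bb, dif_neg hj, dif_neg (lt_irrefl p)]
    have e2 : bb v σ k = bb v σ p := by rw [bb, bb, dif_neg h2, dif_neg (lt_irrefl p)]
    rw [e1, e2]

lemma bb_last (h0 : 0 < p) : bb v σ p = bb v σ (p - 1) := by
  rw [bb, bb, dif_neg (lt_irrefl p), dif_pos h0, dif_pos (by omega : p - 1 < p)]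

/-- The key pointwise description of the level sets in terms of the sorted values. -/
lemma levelset_eq {F : Finset (Fin p) → ℝ} (hs : SortedBy v σ) (hF0 : F ∅ = 0)
    (hFV : F Finset.univ = 0) (α : ℝ) :
    F (Finset.univ.filter (fun i => α ≤ v i)) =
      ∑ j ∈ Finset.range p,
        (Set.Ioc (bb v σ (j + 1)) (bb v σ j)).indicator (fun _ => F (SS σ (j + 1))) α := by
  rcases Nat.eq_zero_or_pos p with hp | hp
  · subst hp
    rw [Finset.range_zero, Finset.sum_empty]
    have he : (Finset.univ.filter fun i : Fin 0 => α ≤ v i) = ∅ :=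
      Finset.eq_empty_of_isEmpty _
    rw [he, hF0]
  by_cases hα : bb v σ 0 < α
  · have hempty : (Finset.univ.filter fun i => α ≤ v i) = ∅ := by
      apply Finset.filter_false_of_mem
      intro i _
      have h1 : v i ≤ bb v σ 0 := by
        have := bb_le hs (σ.symm i) (Nat.zero_le _)
        rwa [Equiv.apply_symm_apply] at this
      linarith
    rw [hempty, hF0]
    symm
    apply Finset.sum_eq_zero
    intro j hj
    apply Set.indicator_of_notMem
    simp only [Set.mem_Ioc, not_and, not_le]
    intro _
    calc bb v σ j ≤ bb v σ 0 := bb_anti hs (Nat.zero_le _)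
      _ < α := hα
  · push_neg at hα
    set K := (Finset.range p).filter (fun j => α ≤ bb v σ j) with hK
    have h0K : (0 : ℕ) ∈ K := Finset.mem_filter.2 ⟨Finset.mem_range.2 hp, hα⟩
    have hKne : K.Nonempty := ⟨0, h0K⟩
    set j' := K.max' hKne with hj'
    have hj'K : j' ∈ K := K.max'_mem hKne
    have hj'p : j' < p := Finset.mem_range.1 (Finset.mem_filter.1 hj'K).1
    have hαj' : α ≤ bb v σ j' := (Finset.mem_filter.1 hj'K).2
    by_cases hlast : j' = p - 1
    · have hmin : α ≤ bb v σ (p - 1) := hlast ▸ hαj'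
      have huniv : (Finset.univ.filter fun i => α ≤ v i) = Finset.univ := by
        apply Finset.filter_true_of_mem
        intro i _
        have h2 : bb v σ (p - 1) ≤ v i := by
          have := le_bb hs (σ.symm i) (by omega : ((σ.symm i : Fin p) : ℕ) ≤ p - 1)
          rwa [Equiv.apply_symm_apply] at this
        linarith
      rw [huniv, hFV]
      symm
      apply Finset.sum_eq_zero
      intro j hj
      apply Set.indicator_of_notMem
      simp only [Set.mem_Ioc, not_and, not_le]
      intro hcon
      exfalso
      have h3 : bb v σ p ≤ bb v σ (j + 1) :=
        bb_anti hs (by rw [Finset.mem_range] at hj; omega)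
      rw [bb_last hp] at h3
      linarith
    · have hj2 : j' + 1 < p := by omega
      have hα2 : bb v σ (j' + 1) < α := by
        by_contra hcon
        push_neg at hcon
        have hmem : j' + 1 ∈ K := Finset.mem_filter.2 ⟨Finset.mem_range.2 hj2, hcon⟩
        have := K.le_max' _ hmem
        omega
      have hlevel : (Finset.univ.filter fun i => α ≤ v i) = SS σ (j' + 1) := by
        ext i
        simp only [Finset.mem_filter, Finset.mem_univ, true_and, mem_SS]
        constructor
        · intro hvi
          by_contra hcon
          push_neg at hcon
          have h4 : v i ≤ bb v σ (j' + 1) := by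
            have := bb_le hs (σ.symm i) hcon
            rwa [Equiv.apply_symm_apply] at this
          linarith
        · intro hcon
          have h5 : bb v σ j' ≤ v i := by
            have := le_bb hs (σ.symm i) (by omega : ((σ.symm i : Fin p) : ℕ) ≤ j')
            rwa [Equiv.apply_symm_apply] at this
          linarith
      rw [hlevel]
      rw [Finset.sum_eq_single j']
      · rw [Set.indicator_of_mem (Set.mem_Ioc.2 ⟨hα2, hαj'⟩)]
      · intro j hj hne
        apply Set.indicator_of_notMem
        simp only [Set.mem_Ioc, not_and, not_le]
        intro h1
        by_contra h2
        push_neg at h2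
        rcases lt_or_gt_of_ne hne with hlt | hgt
        · have := bb_anti hs (show j + 1 ≤ j' by omega)
          linarith
        · have := bb_anti hs (show j' + 1 ≤ j by omega)
          linarith
      · intro hj
        exact absurd (Finset.mem_range.2 hj'p) hj

lemma lovasz_sorted {F : Finset (Fin p) → ℝ} (hF0 : F ∅ = 0) (hFV : F Finset.univ = 0)
    (hs : SortedBy v σ) :
    lovasz F v = ∑ j ∈ Finset.range p, F (SS σ (j + 1)) * (bb v σ j - bb v σ (j + 1)) := by
  have hfun : (fun α : ℝ => F (Finset.univ.filter (fun i => α ≤ v i))) =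
      fun α => ∑ j ∈ Finset.range p,
        (Set.Ioc (bb v σ (j + 1)) (bb v σ j)).indicator (fun _ => F (SS σ (j + 1))) α :=
    funext fun α => levelset_eq hs hF0 hFV α
  rw [lovasz, hfun, integral_finset_sum]
  · apply Finset.sum_congr rfl
    intro j hj
    rw [integral_indicator_const _ measurableSet_Ioc, Real.volume_real_Ioc_of_le (bb_anti hs (Nat.le_succ j)), smul_eq_mul,
      mul_comm]
  · intro j _
    rw [integrable_indicator_iff measurableSet_Ioc]
    exact integrableOn_const measure_Ioc_lt_top.ne

end Sorted

/-- greedy vector associated to an ordering -/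
noncomputable def gr (F : Finset (Fin p) → ℝ) (σ : Equiv.Perm (Fin p)) (i : Fin p) : ℝ :=
  F (SS σ ((σ.symm i : ℕ) + 1)) - F (SS σ (σ.symm i))

lemma sum_SS_gr (F : Finset (Fin p) → ℝ) (hF0 : F ∅ = 0) (σ : Equiv.Perm (Fin p))
    {k : ℕ} (hk : k ≤ p) : (SS σ k).sum (gr F σ) = F (SS σ k) := by
  rw [sum_SS]
  have : ∀ m ∈ Finset.range k, snn (gr F σ) σ m = F (SS σ (m + 1)) - F (SS σ m) := by
    intro m hm
    rw [Finset.mem_range] at hm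
    have hmp : m < p := lt_of_lt_of_le hm hk
    rw [snn, dif_pos hmp, gr, Equiv.symm_apply_apply]
  rw [Finset.sum_congr rfl this, Finset.sum_range_sub (fun m => F (SS σ m)) k, SS_zero, hF0,
    sub_zero]

lemma sum_univ_gr (F : Finset (Fin p) → ℝ) (hF0 : F ∅ = 0) (hFV : F Finset.univ = 0)
    (σ : Equiv.Perm (Fin p)) : Finset.univ.sum (gr F σ) = 0 := by
  have := sum_SS_gr F hF0 σ (le_refl p)
  rwa [SS_of_ge σ le_rfl, hFV] at this

lemma gr_mem_polyhedron (F : Finset (Fin p) → ℝ) (hsub : Submodular F) (hF0 : F ∅ = 0)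
    (σ : Equiv.Perm (Fin p)) (A : Finset (Fin p)) : A.sum (gr F σ) ≤ F A := by
  have key : ∀ k : ℕ, (A ∩ SS σ k).sum (gr F σ) ≤ F (A ∩ SS σ k) := by
    intro k
    induction k with
    | zero => simp [SS_zero, hF0]
    | succ k ih =>
      by_cases h : k < p
      · set i : Fin p := σ ⟨k, h⟩ with hi
        have hSS : SS σ (k + 1) = insert i (SS σ k) := SS_succ σ h
        by_cases hiA : i ∈ A
        · have hA1 : A ∩ SS σ (k + 1) = insert i (A ∩ SS σ k) := by
            rw [hSS, Finset.inter_insert_of_mem hiA]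
          have hni : i ∉ A ∩ SS σ k := fun hc =>
            not_mem_SS_self σ h (Finset.mem_of_mem_inter_right hc)
          have hgri : gr F σ i = F (SS σ (k + 1)) - F (SS σ k) := by
            rw [gr, hi, Equiv.symm_apply_apply]
          have hsm := hsub (SS σ k) (A ∩ SS σ (k + 1))
          have hunion : SS σ k ∪ (A ∩ SS σ (k + 1)) = SS σ (k + 1) := by
            apply Finset.Subset.antisymm
            · apply Finset.union_subset
              · intro x hx; rw [mem_SS] at hx ⊢; omega
              · exact Finset.inter_subset_right
            · rw [hSS]
              intro x hx
              rcases Finset.mem_insert.1 hx with rfl | hx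
              · exact Finset.mem_union_right _ (Finset.mem_inter.2
                  ⟨hiA, Finset.mem_insert_self _ _⟩)
              · exact Finset.mem_union_left _ hx
          have hinter : SS σ k ∩ (A ∩ SS σ (k + 1)) = A ∩ SS σ k := by
            ext x
            simp only [Finset.mem_inter, mem_SS]
            constructor
            · rintro ⟨h1, h2, _⟩; exact ⟨h2, h1⟩
            · rintro ⟨h1, h2⟩; exact ⟨h2, h1, by omega⟩
          rw [hunion, hinter] at hsm
          rw [hA1] at hsm ⊢
          rw [Finset.sum_insert hni, hgri]
          linarith
        · have hA1 : A ∩ SS σ (k + 1) = A ∩ SS σ k := by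
            ext x
            rw [Finset.mem_inter, Finset.mem_inter, hSS, Finset.mem_insert]
            constructor
            · rintro ⟨h1, (rfl | h2)⟩
              · exact absurd h1 hiA
              · exact ⟨h1, h2⟩
            · rintro ⟨h1, h2⟩
              exact ⟨h1, Or.inr h2⟩
          rw [hA1]; exact ih
      · have : SS σ (k + 1) = SS σ k := by
          rw [SS_of_ge σ (by omega), SS_of_ge σ (by omega)]
        rw [this]; exact ih
  have := key p
  rwa [SS_of_ge σ le_rfl, Finset.inter_univ] at this

/-- an antitone ordering always exists -/
lemma exists_sorted (v : Fin p → ℝ) : ∃ σ : Equiv.Perm (Fin p), SortedBy v σ := by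
  refine ⟨Tuple.sort (fun i => -v i), ?_⟩
  intro j k hjk
  have := Tuple.monotone_sort (fun i => -v i) hjk
  simpa using this

/-- Lower bound: any vector in the submodular "polyhedron" with total mass `0`
gives a lower bound on the Lovász extension. -/
lemma inner_le_lovasz (F : Finset (Fin p) → ℝ) (hF0 : F ∅ = 0) (hFV : F Finset.univ = 0)
    (s : Fin p → ℝ) (hA : ∀ A : Finset (Fin p), A.sum s ≤ F A)
    (hU : Finset.univ.sum s = 0) (v : Fin p → ℝ) :
    ∑ i, s i * v i ≤ lovasz F v := by
  obtain ⟨σ, hσ⟩ := exists_sorted v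
  rw [lovasz_sorted hF0 hFV hσ, abel_main σ s v, hU, zero_mul, add_zero]
  apply Finset.sum_le_sum
  intro j _
  exact mul_le_mul_of_nonneg_right (hA _) (sub_nonneg.2 (bb_anti hσ (Nat.le_succ j)))

lemma lovasz_eq_inner_gr (F : Finset (Fin p) → ℝ) (hF0 : F ∅ = 0) (hFV : F Finset.univ = 0)
    {v : Fin p → ℝ} {σ : Equiv.Perm (Fin p)} (hσ : SortedBy v σ) :
    lovasz F v = ∑ i, gr F σ i * v i := by
  rw [lovasz_sorted hF0 hFV hσ, abel_main σ (gr F σ) v, sum_univ_gr F hF0 hFV σ, zero_mul,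
    add_zero]
  apply Finset.sum_congr rfl
  intro j hj
  rw [Finset.mem_range] at hj
  rw [sum_SS_gr F hF0 σ (by omega)]

/-- convexity along segments -/
lemma lovasz_segment (F : Finset (Fin p) → ℝ) (hsub : Submodular F) (hF0 : F ∅ = 0)
    (hFV : F Finset.univ = 0) (a b : Fin p → ℝ) {ε : ℝ} (h0 : 0 ≤ ε) (h1 : ε ≤ 1) :
    lovasz F (fun i => (1 - ε) * a i + ε * b i) ≤
      (1 - ε) * lovasz F a + ε * lovasz F b := by
  obtain ⟨σ, hσ⟩ := exists_sorted (fun i => (1 - ε) * a i + ε * b i)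
  rw [lovasz_eq_inner_gr F hF0 hFV hσ]
  have hga := inner_le_lovasz F hF0 hFV (gr F σ) (gr_mem_polyhedron F hsub hF0 σ)
    (sum_univ_gr F hF0 hFV σ) a
  have hgb := inner_le_lovasz F hF0 hFV (gr F σ) (gr_mem_polyhedron F hsub hF0 σ)
    (sum_univ_gr F hF0 hFV σ) b
  have : ∑ i, gr F σ i * ((1 - ε) * a i + ε * b i) =
      (1 - ε) * ∑ i, gr F σ i * a i + ε * ∑ i, gr F σ i * b i := by
    rw [Finset.mul_sum, Finset.mul_sum, ← Finset.sum_add_distrib]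
    apply Finset.sum_congr rfl
    intro i _; ring
  rw [this]
  have e1 : (0:ℝ) ≤ 1 - ε := by linarith
  nlinarith [mul_le_mul_of_nonneg_left hga e1, mul_le_mul_of_nonneg_left hgb h0]

lemma lovasz_add_indicator (F : Finset (Fin p) → ℝ) (hsub : Submodular F) (hF0 : F ∅ = 0)
    (hFV : F Finset.univ = 0) (w : Fin p → ℝ) (A : Finset (Fin p)) :
    lovasz F (fun i => w i + (if i ∈ A then (1:ℝ) else 0)) ≤ lovasz F w + F A := by
  obtain ⟨σ, hσ⟩ := exists_sorted (fun i => w i + (if i ∈ A then (1:ℝ) else 0))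
  rw [lovasz_eq_inner_gr F hF0 hFV hσ]
  have hgw := inner_le_lovasz F hF0 hFV (gr F σ) (gr_mem_polyhedron F hsub hF0 σ)
    (sum_univ_gr F hF0 hFV σ) w
  have hga : ∑ i, gr F σ i * (if i ∈ A then (1:ℝ) else 0) = A.sum (gr F σ) := by
    simp [mul_ite, Finset.sum_ite_mem]
  have : ∑ i, gr F σ i * (w i + (if i ∈ A then (1:ℝ) else 0)) =
      (∑ i, gr F σ i * w i) + ∑ i, gr F σ i * (if i ∈ A then (1:ℝ) else 0) := by
    rw [← Finset.sum_add_distrib]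
    apply Finset.sum_congr rfl
    intro i _; ring
  rw [this, hga]
  have := gr_mem_polyhedron F hsub hF0 σ A
  linarith

lemma lovasz_shift (F : Finset (Fin p) → ℝ) (v : Fin p → ℝ) :
    lovasz F (fun i => v i - 1) = lovasz F v := by
  unfold lovasz
  have : ∀ α : ℝ, (Finset.univ.filter (fun i => α ≤ v i - 1)) =
      (Finset.univ.filter (fun i => α + 1 ≤ v i)) := by
    intro α; apply Finset.filter_congr; intro i _
    constructor <;> intro h <;> linarith
  calc ∫ α : ℝ, F (Finset.univ.filter (fun i => α ≤ v i - 1))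
      = ∫ α : ℝ, F (Finset.univ.filter (fun i => α + 1 ≤ v i)) := by
        congr 1; funext α; rw [this α]
    _ = ∫ α : ℝ, F (Finset.univ.filter (fun i => α ≤ v i)) :=
        (measurePreserving_add_right volume 1).integral_comp
          (MeasurableEquiv.addRight 1).measurableEmbedding
          (fun β => F (Finset.univ.filter (fun i => β ≤ v i)))

lemma lovasz_zero (F : Finset (Fin p) → ℝ) (hF0 : F ∅ = 0) (hFV : F Finset.univ = 0) :
    lovasz F (fun _ => (0:ℝ)) = 0 := by
  unfold lovasz
  have : (fun α : ℝ => F (Finset.univ.filter (fun i => α ≤ (0:ℝ)))) = fun _ => (0:ℝ) := by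
    funext α
    by_cases h : α ≤ 0
    · simp only [Finset.filter_true_of_mem (fun i _ => h)]; exact hFV
    · rw [Finset.filter_false_of_mem (fun i _ => h), hF0]
  rw [this, integral_zero]

end ProxAux

open ProxAux

set_option maxHeartbeats 1000000 in
/-- The proximal operator of `f + λ‖·‖₁` is obtained by soft-thresholding the
proximal operator of `f`. -/
theorem prox_soft_threshold {p : ℕ} (F : Finset (Fin p) → ℝ)
    (hsub : Submodular F) (h0 : F ∅ = 0) (hV : F Finset.univ = 0)
    (lam : ℝ) (hlam : 0 < lam) (z w : Fin p → ℝ)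
    (hw : ∀ u : Fin p → ℝ,
      (1 / 2) * ∑ i, (w i - z i) ^ 2 + lovasz F w ≤
        (1 / 2) * ∑ i, (u i - z i) ^ 2 + lovasz F u)
    (t : Fin p → ℝ)
    (ht : ∀ k, t k = Real.sign (w k) * max (|w k| - lam) 0) :
    ∀ u : Fin p → ℝ,
      (1 / 2) * ∑ i, (t i - z i) ^ 2 + lovasz F t + lam * ∑ i, |t i| ≤
        (1 / 2) * ∑ i, (u i - z i) ^ 2 + lovasz F u + lam * ∑ i, |u i| := by
  classical
  set s0 : Fin p → ℝ := fun i => z i - w i with hs0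
  -- Step 1: subgradient inequality for the Lovász extension at `w`.
  have hsub' : ∀ u : Fin p → ℝ,
      lovasz F w + ∑ i, s0 i * (u i - w i) ≤ lovasz F u := by
    intro u
    set C : ℝ := ∑ i, (u i - w i) ^ 2 with hC
    have hCnn : 0 ≤ C := Finset.sum_nonneg fun i _ => sq_nonneg _
    set S : ℝ := ∑ i, (w i - z i) * (u i - w i) with hS
    have hsum : ∑ i, s0 i * (u i - w i) = -S := by
      rw [hS, ← Finset.sum_neg_distrib]
      apply Finset.sum_congr rfl
      intro i _
      rw [hs0]
      ring
    have key : ∀ ε : ℝ, 0 < ε → ε ≤ 1 →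
        0 ≤ lovasz F u - lovasz F w + S + ε * C / 2 := by
      intro ε hε hε1
      have h1 := hw (fun i => (1 - ε) * w i + ε * u i)
      have h2 := ProxAux.lovasz_segment F hsub h0 hV w u (le_of_lt hε) hε1
      have hquad : ∑ i, ((fun i => (1 - ε) * w i + ε * u i) i - z i) ^ 2 =
          ∑ i, (w i - z i) ^ 2 + (2 * ε) * S + ε ^ 2 * C := by
        rw [hS, hC, Finset.mul_sum, Finset.mul_sum, ← Finset.sum_add_distrib,
          ← Finset.sum_add_distrib]
        apply Finset.sum_congr rfl
        intro i _
        ring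
      rw [hquad] at h1
      nlinarith [h1, h2, hε, hCnn]
    by_contra hcon
    push_neg at hcon
    rw [hsum] at hcon
    set D : ℝ := lovasz F u - lovasz F w + S with hD
    have hDneg : D < 0 := by rw [hD]; linarith
    set ε : ℝ := min 1 ((-D) / (C + 1)) with hε
    have hε0 : 0 < ε :=
      lt_min one_pos (div_pos (by linarith) (by linarith))
    have hε1 : ε ≤ 1 := min_le_left _ _
    have h5 := key ε hε0 hε1
    have h6 : ε ≤ (-D) / (C + 1) := min_le_right _ _
    have h7 : ε * (C + 1) ≤ -D := (le_div_iff₀ (by linarith : (0:ℝ) < C + 1)).1 h6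
    nlinarith [h5, h7, hε0, hCnn, hDneg]
  -- Step 2: `s0` lies in the submodular polyhedron with total mass `0`.
  have hAle : ∀ A : Finset (Fin p), A.sum s0 ≤ F A := by
    intro A
    have h1 := hsub' (fun i => w i + (if i ∈ A then (1:ℝ) else 0))
    have h2 := ProxAux.lovasz_add_indicator F hsub h0 hV w A
    have h3 : ∑ i, s0 i * ((fun i => w i + (if i ∈ A then (1:ℝ) else 0)) i - w i)
        = A.sum s0 := by
      simp [mul_ite, Finset.sum_ite_mem]
    rw [h3] at h1
    linarith
  have hVsum : Finset.univ.sum s0 = 0 := by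
    have hle : Finset.univ.sum s0 ≤ 0 := by
      have := hAle Finset.univ
      rwa [hV] at this
    have hge : 0 ≤ Finset.univ.sum s0 := by
      have h1 := hsub' (fun i => w i - 1)
      rw [ProxAux.lovasz_shift F w] at h1
      have h3 : ∑ i, s0 i * ((fun i => w i - 1) i - w i) = -Finset.univ.sum s0 := by
        rw [← Finset.sum_neg_distrib]
        apply Finset.sum_congr rfl
        intro i _
        ring
      rw [h3] at h1
      linarith
    linarith
  -- Step 3: `⟨s0, w⟩ = f(w)`.
  have hfw : lovasz F w = ∑ i, s0 i * w i := by
    have hge := ProxAux.inner_le_lovasz F h0 hV s0 hAle hVsum w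
    have h1 := hsub' (fun _ => (0:ℝ))
    rw [ProxAux.lovasz_zero F h0 hV] at h1
    have h3 : ∑ i, s0 i * ((fun _ => (0:ℝ)) i - w i) = -∑ i, s0 i * w i := by
      rw [← Finset.sum_neg_distrib]
      apply Finset.sum_congr rfl
      intro i _
      ring
    rw [h3] at h1
    linarith
  -- Step 4: sort `w`, and note `t` is sorted by the same ordering.
  obtain ⟨σ, hσ⟩ := ProxAux.exists_sorted w
  have hmono : ∀ x y : ℝ, x ≤ y →
      Real.sign x * max (|x| - lam) 0 ≤ Real.sign y * max (|y| - lam) 0 := by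
    have geq : ∀ x : ℝ, Real.sign x * max (|x| - lam) 0
        = max (x - lam) 0 + min (x + lam) 0 := by
      intro x
      rcases lt_trichotomy x 0 with hx | hx | hx
      · rw [Real.sign_of_neg hx, abs_of_neg hx,
          max_eq_right (by linarith : x - lam ≤ 0)]
        rcases le_total (x + lam) 0 with h | h
        · rw [min_eq_left h, max_eq_left (by linarith : (0:ℝ) ≤ -x - lam)]
          ring
        · rw [min_eq_right h, max_eq_right (by linarith : -x - lam ≤ 0)]
          ring
      · subst hx
        rw [Real.sign_zero, abs_zero, zero_mul,
          max_eq_right (by linarith : (0:ℝ) - lam ≤ 0),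
          min_eq_right (by linarith : (0:ℝ) ≤ 0 + lam)]
        ring
      · rw [Real.sign_of_pos hx, abs_of_pos hx, one_mul,
          min_eq_right (by linarith : (0:ℝ) ≤ x + lam)]
        ring
    intro x y hxy
    rw [geq x, geq y]
    exact add_le_add (max_le_max (by linarith) le_rfl)
      (min_le_min (by linarith) le_rfl)
  have hts : ProxAux.SortedBy t σ := by
    intro j k hjk
    rw [ht (σ k), ht (σ j)]
    exact hmono _ _ (hσ j k hjk)
  -- Step 5: complementary slackness.
  have hterm0 : ∀ j ∈ Finset.range p,
      (F (ProxAux.SS σ (j + 1)) - (ProxAux.SS σ (j + 1)).sum s0) *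
        (ProxAux.bb w σ j - ProxAux.bb w σ (j + 1)) = 0 := by
    have e1 := ProxAux.lovasz_sorted h0 hV hσ
    have e2 := ProxAux.abel_main σ s0 w
    rw [hVsum, zero_mul, add_zero] at e2
    have hzero : ∑ j ∈ Finset.range p,
        (F (ProxAux.SS σ (j + 1)) - (ProxAux.SS σ (j + 1)).sum s0) *
          (ProxAux.bb w σ j - ProxAux.bb w σ (j + 1)) = 0 := by
      have : ∑ j ∈ Finset.range p,
          (F (ProxAux.SS σ (j + 1)) - (ProxAux.SS σ (j + 1)).sum s0) *
            (ProxAux.bb w σ j - ProxAux.bb w σ (j + 1)) =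
          (∑ j ∈ Finset.range p, F (ProxAux.SS σ (j + 1)) *
            (ProxAux.bb w σ j - ProxAux.bb w σ (j + 1))) -
          ∑ j ∈ Finset.range p, (ProxAux.SS σ (j + 1)).sum s0 *
            (ProxAux.bb w σ j - ProxAux.bb w σ (j + 1)) := by
        rw [← Finset.sum_sub_distrib]
        apply Finset.sum_congr rfl
        intro j _
        ring
      rw [this, ← e1, ← e2, hfw]
      ring
    exact (Finset.sum_eq_zero_iff_of_nonneg (fun j _ =>
      mul_nonneg (sub_nonneg.2 (hAle _))
        (sub_nonneg.2 (ProxAux.bb_anti hσ (Nat.le_succ j))))).1 hzero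
  -- Step 6: `f(t) = ⟨s0, t⟩`.
  have hbbt : ∀ k : ℕ, ProxAux.bb t σ k =
      Real.sign (ProxAux.bb w σ k) * max (|ProxAux.bb w σ k| - lam) 0 := by
    intro k
    rw [ProxAux.bb, ProxAux.bb]
    split_ifs with h1 h2
    · exact ht _
    · exact ht _
    · rw [Real.sign_zero, zero_mul]
  have hft : lovasz F t = ∑ i, s0 i * t i := by
    rw [ProxAux.lovasz_sorted h0 hV hts, ProxAux.abel_main σ s0 t, hVsum, zero_mul,
      add_zero]
    apply Finset.sum_congr rfl
    intro j hj
    by_cases hΔ : ProxAux.bb t σ j = ProxAux.bb t σ (j + 1)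
    · rw [hΔ, sub_self, mul_zero, mul_zero]
    · have hΔw : ProxAux.bb w σ j ≠ ProxAux.bb w σ (j + 1) := by
        intro he
        exact hΔ (by rw [hbbt, hbbt, he])
      have hFe : F (ProxAux.SS σ (j + 1)) = (ProxAux.SS σ (j + 1)).sum s0 := by
        rcases mul_eq_zero.1 (hterm0 j hj) with h | h
        · linarith [sub_eq_zero.1 h]
        · exact absurd (sub_eq_zero.1 h) hΔw
      rw [hFe]
  -- Step 7: final per-coordinate inequality and assembly.
  intro u
  have hfu := ProxAux.inner_le_lovasz F h0 hV s0 hAle hVsum u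
  have hper : ∀ i : Fin p,
      (1/2) * (t i - z i)^2 + s0 i * t i + lam * |t i| ≤
        (1/2) * (u i - z i)^2 + s0 i * u i + lam * |u i| := by
    intro i
    have hs0i : s0 i = z i - w i := rfl
    rcases lt_or_ge lam (w i) with h1 | h1
    · have hc : t i = w i - lam := by
        rw [ht i, Real.sign_of_pos (by linarith), abs_of_pos (by linarith),
          one_mul, max_eq_left (by linarith)]
      have hct : |t i| = w i - lam := by
        rw [hc]
        exact abs_of_nonneg (by linarith)
      have hub : 0 ≤ lam * (|u i| - u i) :=
        mul_nonneg hlam.le (sub_nonneg.2 (le_abs_self (u i)))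
      nlinarith [sq_nonneg (u i - w i + lam), hub]
    · rcases lt_or_ge (w i) (-lam) with h2 | h2
      · have hc : t i = w i + lam := by
          rw [ht i, Real.sign_of_neg (by linarith), abs_of_neg (by linarith),
            max_eq_left (by linarith)]
          ring
        have hct : |t i| = -(w i + lam) := by
          rw [hc]
          exact abs_of_nonpos (by linarith)
        have hub : 0 ≤ lam * (|u i| + u i) :=
          mul_nonneg hlam.le (by linarith [neg_abs_le (u i)])
        nlinarith [sq_nonneg (u i - w i - lam), hub]
      · have hwb : |w i| ≤ lam := abs_le.2 ⟨by linarith, h1⟩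
        have hc : t i = 0 := by
          rw [ht i, max_eq_right (by linarith), mul_zero]
        have hct : |t i| = 0 := by rw [hc, abs_zero]
        have hWa : w i * u i ≤ lam * |u i| := by
          calc w i * u i ≤ |w i * u i| := le_abs_self _
            _ = |w i| * |u i| := abs_mul _ _
            _ ≤ lam * |u i| := mul_le_mul_of_nonneg_right hwb (abs_nonneg _)
        nlinarith [hWa, sq_nonneg (u i)]
  have hsum_le : ∑ i, ((1/2) * (t i - z i)^2 + s0 i * t i + lam * |t i|) ≤
      ∑ i, ((1/2) * (u i - z i)^2 + s0 i * u i + lam * |u i|) :=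
    Finset.sum_le_sum (fun i _ => hper i)
  have expand1 : ∑ i, ((1/2) * (t i - z i)^2 + s0 i * t i + lam * |t i|) =
      (1/2) * ∑ i, (t i - z i)^2 + ∑ i, s0 i * t i + lam * ∑ i, |t i| := by
    rw [Finset.sum_add_distrib, Finset.sum_add_distrib, Finset.mul_sum, Finset.mul_sum]
  have expand2 : ∑ i, ((1/2) * (u i - z i)^2 + s0 i * u i + lam * |u i|) =
      (1/2) * ∑ i, (u i - z i)^2 + ∑ i, s0 i * u i + lam * ∑ i, |u i| := by
    rw [Finset.sum_add_distrib, Finset.sum_add_distrib, Finset.mul_sum, Finset.mul_sum]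
  rw [expand1, expand2] at hsum_le
  rw [hft]
  linarith
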